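/- arXiv:2604.07845 — 5 statements merged into one kernel-verified Lean document; each statement's English description precedes it below -/
import Mathlib

section
/- Let A be a nonnegative self-adjoint operator on a Hilbert space H with semigroup T_t = e^{-tA}, and let ν be a measure on (0,∞) with ∫₀^∞ s dν(s) < ∞. Then for every f in the form domain D(√A), ∫₀^∞ ⟨f - T_s f, f⟩ dν(s) ≤ ‖√A f‖² · ∫₀^∞ s dν(s). -/
open MeasureTheory

/-- Let `A` be a nonnegative self-adjoint operator (realized spectrally as multiplication
by a nonnegative function `a` on `L²(μ)`) with semigroup `T_s = e^{-sA}`, and `ν` a measure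
on `(0,∞)` with `∫ s dν < ∞`. Then for `f` in the form domain,
`∫₀^∞ ⟨f - T_s f, f⟩ dν(s) ≤ ‖√A f‖² ∫₀^∞ s dν(s)`. -/
theorem integral_semigroup_form_le
    (Ω : Type) [MeasurableSpace Ω] (μ : Measure Ω) (a f : Ω → ℝ)
    (hameas : Measurable a) (ha : ∀ ω, 0 ≤ a ω)
    (hf : MemLp f 2 μ)
    (hform : MemLp (fun ω => Real.sqrt (a ω) * f ω) 2 μ)
    (ν : Measure ℝ) (hνpos : ∀ᵐ s ∂ν, 0 < s)
    (hνint : Integrable (fun s : ℝ => s) ν) :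
    ∫ s, (∫ ω, (f ω - Real.exp (-(s * a ω)) * f ω) * f ω ∂μ) ∂ν ≤
      (∫ ω, a ω * f ω ^ 2 ∂μ) * ∫ s, s ∂ν := by
  set C := ∫ ω, a ω * f ω ^ 2 ∂μ with hC
  have hint : Integrable (fun ω => a ω * f ω ^ 2) μ := by
    have h2 := hform.integrable_sq
    refine h2.congr (Filter.Eventually.of_forall fun ω => ?_)
    simp only [mul_pow, Real.sq_sqrt (ha ω)]
  have hCnn : 0 ≤ C := integral_nonneg fun ω => mul_nonneg (ha ω) (sq_nonneg _)
  have key : ∀ s : ℝ, 0 < s →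
      (∫ ω, (f ω - Real.exp (-(s * a ω)) * f ω) * f ω ∂μ) ≤ s * C := by
    intro s hs
    have hbound : ∀ ω, (f ω - Real.exp (-(s * a ω)) * f ω) * f ω ≤ s * (a ω * f ω ^ 2) := by
      intro ω
      have h1 : -(s * a ω) + 1 ≤ Real.exp (-(s * a ω)) := Real.add_one_le_exp _
      nlinarith [sq_nonneg (f ω)]
    have hnn : ∀ ω, 0 ≤ (f ω - Real.exp (-(s * a ω)) * f ω) * f ω := by
      intro ω
      have hx : 0 ≤ s * a ω := mul_nonneg hs.le (ha ω)
      have he : Real.exp (-(s * a ω)) ≤ 1 := Real.exp_le_one_iff.mpr (by linarith)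
      nlinarith [sq_nonneg (f ω)]
    calc (∫ ω, (f ω - Real.exp (-(s * a ω)) * f ω) * f ω ∂μ)
        ≤ ∫ ω, s * (a ω * f ω ^ 2) ∂μ :=
          integral_mono_of_nonneg (Filter.Eventually.of_forall hnn) (hint.const_mul s)
            (Filter.Eventually.of_forall hbound)
      _ = s * C := integral_const_mul _ _
  have hnn' : 0 ≤ᵐ[ν] fun s => ∫ ω, (f ω - Real.exp (-(s * a ω)) * f ω) * f ω ∂μ := by
    filter_upwards [hνpos] with s hs
    simp only [Pi.zero_apply]
    refine integral_nonneg fun ω => ?_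
    show (0:ℝ) ≤ (f ω - Real.exp (-(s * a ω)) * f ω) * f ω
    have hx : 0 ≤ s * a ω := mul_nonneg hs.le (ha ω)
    have he : Real.exp (-(s * a ω)) ≤ 1 := Real.exp_le_one_iff.mpr (by linarith)
    nlinarith [sq_nonneg (f ω)]
  have hle' : (fun s => ∫ ω, (f ω - Real.exp (-(s * a ω)) * f ω) * f ω ∂μ)
      ≤ᵐ[ν] fun s => s * C := by
    filter_upwards [hνpos] with s hs using key s hs
  have h1 := integral_mono_of_nonneg hnn' (hνint.mul_const C) hle'
  rw [show (fun s : ℝ => s * C) = fun s : ℝ => C * s from funext fun s => mul_comm _ _, integral_const_mul] at h1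
  linarith [h1]
end

section
/- Let A be a nonnegative self-adjoint operator on a Hilbert space H and Φ(λ) = bλ + ∫₀^∞ (1-e^{-λs}) dν(s) a Bernstein function. Then for every f in the form domain D(√A), f also lies in the form domain D(√Φ(A)), and ⟨Φ(A)f, f⟩ = b⟨Af, f⟩ + ∫₀^∞ ⟨f - e^{-sA}f, f⟩ dν(s), where Φ(A) is defined by the spectral functional calculus and the quadratic forms are interpreted via ‖√A f‖² and ‖√Φ(A) f‖². -/
open MeasureTheory
open scoped ENNReal NNReal

lemma okura_sqrt_add_le (x y : ℝ) (hx : 0 ≤ x) (hy : 0 ≤ y) :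
    Real.sqrt (x + y) ≤ Real.sqrt x + Real.sqrt y := by
  have h := Real.sqrt_le_sqrt (show x + y ≤ (Real.sqrt x + Real.sqrt y) ^ 2 by
    nlinarith [Real.sq_sqrt hx, Real.sq_sqrt hy, Real.sqrt_nonneg x, Real.sqrt_nonneg y])
  rwa [Real.sqrt_sq (by positivity)] at h

lemma okura_one_sub_exp_nonneg {lam s : ℝ} (hlam : 0 ≤ lam) (hs : 0 ≤ s) :
    0 ≤ 1 - Real.exp (-(lam * s)) := by
  have h1 : Real.exp (-(lam * s)) ≤ Real.exp 0 :=
    Real.exp_le_exp.mpr (by nlinarith)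
  rw [Real.exp_zero] at h1
  linarith

lemma okura_one_sub_exp_le {lam s : ℝ} (hlam : 0 ≤ lam) (hs : 0 < s) :
    1 - Real.exp (-(lam * s)) ≤ min 1 s * (1 + lam) := by
  have hexp : 1 - lam * s ≤ Real.exp (-(lam * s)) := by
    have := Real.add_one_le_exp (-(lam * s)); linarith
  have h1 : 1 - Real.exp (-(lam * s)) ≤ 1 := by
    have := Real.exp_pos (-(lam * s)); linarith
  have h2 : 1 - Real.exp (-(lam * s)) ≤ lam * s := by linarith
  rcases le_total s 1 with h | h
  · rw [min_eq_right h]; nlinarith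
  · rw [min_eq_left h]; nlinarith

/-- Ōkura's representation of the subordinated form: for a nonnegative self-adjoint
operator `A` (realized spectrally as multiplication by a nonnegative function `a` on
`L²(μ)`) and a Bernstein function `Φ(λ) = bλ + ∫ (1-e^{-λs}) dν(s)`, every `f` in the
form domain of `A` lies in the form domain of `Φ(A)` and
`⟨Φ(A)f, f⟩ = b⟨Af, f⟩ + ∫₀^∞ ⟨f - e^{-sA}f, f⟩ dν(s)`. -/
theorem subordinated_form_representation
    (Ω : Type) [MeasurableSpace Ω] (μ : Measure Ω) (a f : Ω → ℝ)
    (hameas : Measurable a) (ha : ∀ ω, 0 ≤ a ω)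
    (b : ℝ) (hb : 0 ≤ b) (ν : Measure ℝ)
    (hνpos : ∀ᵐ s ∂ν, 0 < s)
    (hνint : ∫⁻ s, ENNReal.ofReal (min 1 s) ∂ν ≠ ⊤)
    (Φ : ℝ → ℝ)
    (hΦ : ∀ lam : ℝ, Φ lam = b * lam + ∫ s, (1 - Real.exp (-(lam * s))) ∂ν)
    (hf : MemLp f 2 μ)
    (hform : MemLp (fun ω => Real.sqrt (a ω) * f ω) 2 μ) :
    MemLp (fun ω => Real.sqrt (Φ (a ω)) * f ω) 2 μ ∧
    ∫ ω, Φ (a ω) * f ω ^ 2 ∂μ =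
      b * ∫ ω, a ω * f ω ^ 2 ∂μ +
        ∫ s, (∫ ω, (f ω - Real.exp (-(s * a ω)) * f ω) * f ω ∂μ) ∂ν := by
  -- basic facts about `min 1 s`
  have hmin_meas : Measurable fun s : ℝ => min 1 s := measurable_const.min measurable_id
  have hmin_nonneg : ∀ᵐ s ∂ν, 0 ≤ min 1 s :=
    hνpos.mono fun s hs => le_min zero_le_one hs.le
  have hmin_int : Integrable (fun s => min 1 s) ν := by
    refine ⟨hmin_meas.aestronglyMeasurable, ?_⟩
    show ∫⁻ s, ‖min 1 s‖ₑ ∂ν < ⊤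
    have heq : ∫⁻ s, ‖min 1 s‖ₑ ∂ν = ∫⁻ s, ENNReal.ofReal (min 1 s) ∂ν :=
      lintegral_congr_ae (hmin_nonneg.mono fun s hs => Real.enorm_eq_ofReal hs)
    rw [heq]
    exact lt_top_iff_ne_top.mpr hνint
  set C : ℝ := ∫ s, min 1 s ∂ν with hCdef
  have hCnonneg : 0 ≤ C := integral_nonneg_of_ae hmin_nonneg
  -- integrability of the Bernstein integrand
  have hint : ∀ lam : ℝ, 0 ≤ lam →
      Integrable (fun s => 1 - Real.exp (-(lam * s))) ν := by
    intro lam hlam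
    refine Integrable.mono (hmin_int.mul_const (1 + lam)) ?_ ?_
    · exact (measurable_const.sub
        (((measurable_const.mul measurable_id).neg).exp)).aestronglyMeasurable
    · refine hνpos.mono fun s hs => ?_
      have hb1 : 0 ≤ 1 - Real.exp (-(lam * s)) := okura_one_sub_exp_nonneg hlam hs.le
      have hb2 : 1 - Real.exp (-(lam * s)) ≤ min 1 s * (1 + lam) :=
        okura_one_sub_exp_le hlam hs
      rw [Real.norm_eq_abs, Real.norm_eq_abs, abs_of_nonneg hb1,
        abs_of_nonneg (by nlinarith : (0:ℝ) ≤ min 1 s * (1 + lam))]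
      exact hb2
  set G : ℝ → ℝ := fun lam => ∫ s, (1 - Real.exp (-(lam * s))) ∂ν with hGdef
  have hG_nonneg : ∀ lam : ℝ, 0 ≤ lam → 0 ≤ G lam := fun lam hlam =>
    integral_nonneg_of_ae (hνpos.mono fun s hs => okura_one_sub_exp_nonneg hlam hs.le)
  have hG_le : ∀ lam : ℝ, 0 ≤ lam → G lam ≤ C * (1 + lam) := by
    intro lam hlam
    have h := integral_mono_ae (hint lam hlam) (hmin_int.mul_const (1 + lam))
      (hνpos.mono fun s hs => okura_one_sub_exp_le hlam hs)
    rwa [integral_mul_const] at h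
  -- bounds for Φ
  have hΦ_nonneg : ∀ lam : ℝ, 0 ≤ lam → 0 ≤ Φ lam := by
    intro lam hlam
    rw [hΦ]
    have h1 := hG_nonneg lam hlam
    have h2 : 0 ≤ b * lam := mul_nonneg hb hlam
    rw [hGdef] at h1
    linarith
  have hΦ_le : ∀ lam : ℝ, 0 ≤ lam → Φ lam ≤ C + (b + C) * lam := by
    intro lam hlam
    rw [hΦ]
    have h1 := hG_le lam hlam
    rw [hGdef] at h1
    nlinarith
  -- measurability of G ∘ a via monotonicity
  have hg_mono : Monotone fun lam : ℝ => G (max lam 0) := by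
    intro x y hxy
    have hx : (0:ℝ) ≤ max x 0 := le_max_right _ _
    have hy : (0:ℝ) ≤ max y 0 := le_max_right _ _
    refine integral_mono_ae (hint _ hx) (hint _ hy) (hνpos.mono fun s hs => ?_)
    have hle : max x 0 * s ≤ max y 0 * s :=
      mul_le_mul_of_nonneg_right (max_le_max hxy le_rfl) hs.le
    exact sub_le_sub_left (Real.exp_le_exp.mpr (neg_le_neg hle)) 1
  have hGa_meas : Measurable fun ω => G (a ω) := by
    have h1 : Measurable fun ω => G (max (a ω) 0) :=
      hg_mono.measurable.comp hameas
    have heq : (fun ω => G (a ω)) = fun ω => G (max (a ω) 0) := by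
      funext ω; rw [max_eq_left (ha ω)]
    rw [heq]; exact h1
  have hΦa_meas : Measurable fun ω => Φ (a ω) := by
    have heq : (fun ω => Φ (a ω)) = fun ω => b * a ω + G (a ω) := by
      funext ω; rw [hΦ]
    rw [heq]
    exact (measurable_const.mul hameas).add hGa_meas
  -- Part 1: membership in the form domain of Φ(A)
  have hbC : (0:ℝ) ≤ b + C := by linarith
  have part1 : MemLp (fun ω => Real.sqrt (Φ (a ω)) * f ω) 2 μ := by
    have hmemg : MemLp
        (fun ω => Real.sqrt C * ‖f ω‖ + Real.sqrt (b + C) * ‖Real.sqrt (a ω) * f ω‖) 2 μ :=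
      (hf.norm.const_mul _).add (hform.norm.const_mul _)
    refine hmemg.of_le (((hΦa_meas.sqrt).aestronglyMeasurable).mul hf.1) ?_
    refine Filter.Eventually.of_forall fun ω => ?_
    have h0 : ‖Real.sqrt (Φ (a ω)) * f ω‖ = Real.sqrt (Φ (a ω)) * ‖f ω‖ := by
      rw [norm_mul, Real.norm_of_nonneg (Real.sqrt_nonneg _)]
    have h1 : Real.sqrt (Φ (a ω)) ≤ Real.sqrt (C + (b + C) * a ω) :=
      Real.sqrt_le_sqrt (hΦ_le _ (ha ω))
    have h2 : Real.sqrt (C + (b + C) * a ω) ≤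
        Real.sqrt C + Real.sqrt ((b + C) * a ω) :=
      okura_sqrt_add_le _ _ hCnonneg (mul_nonneg hbC (ha ω))
    have h3 : Real.sqrt ((b + C) * a ω) = Real.sqrt (b + C) * Real.sqrt (a ω) :=
      Real.sqrt_mul hbC _
    have h4 : ‖Real.sqrt (a ω) * f ω‖ = Real.sqrt (a ω) * ‖f ω‖ := by
      rw [norm_mul, Real.norm_of_nonneg (Real.sqrt_nonneg _)]
    have hfn : (0:ℝ) ≤ ‖f ω‖ := norm_nonneg _
    have key : ‖Real.sqrt (Φ (a ω)) * f ω‖ ≤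
        Real.sqrt C * ‖f ω‖ + Real.sqrt (b + C) * ‖Real.sqrt (a ω) * f ω‖ := by
      rw [h0, h4]
      have := mul_le_mul_of_nonneg_right (h1.trans h2) hfn
      rw [h3] at this
      nlinarith [Real.sqrt_nonneg (b + C), Real.sqrt_nonneg (a ω)]
    refine key.trans (le_abs_self _)
  refine ⟨part1, ?_⟩
  -- σ-finiteness of ν
  have hν0 : ν {x : ℝ | x ≤ 0} = 0 := by
    rw [ae_iff] at hνpos
    simpa [not_lt] using hνpos
  have hIci : ∀ ε : ℝ, 0 < ε → ε ≤ 1 → ν (Set.Ici ε) < ⊤ := by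
    intro ε hε hε1
    have hle : ENNReal.ofReal ε * ν (Set.Ici ε) ≤ ∫⁻ s, ENNReal.ofReal (min 1 s) ∂ν := by
      calc ENNReal.ofReal ε * ν (Set.Ici ε)
          = ∫⁻ _ in Set.Ici ε, ENNReal.ofReal ε ∂ν := by rw [setLIntegral_const]
        _ ≤ ∫⁻ s in Set.Ici ε, ENNReal.ofReal (min 1 s) ∂ν := by
            refine setLIntegral_mono (ENNReal.measurable_ofReal.comp hmin_meas) ?_
            intro s hs
            exact ENNReal.ofReal_le_ofReal (le_min hε1 hs)
        _ ≤ ∫⁻ s, ENNReal.ofReal (min 1 s) ∂ν := setLIntegral_le_lintegral _ _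
    by_contra h
    rw [not_lt, top_le_iff] at h
    rw [h, ENNReal.mul_top (ENNReal.ofReal_pos.mpr hε).ne'] at hle
    exact hνint (top_le_iff.mp hle)
  haveI hνsf : SigmaFinite ν := by
    refine ⟨⟨⟨fun n => {x : ℝ | x ≤ 0} ∪ Set.Ici (1 / (n + 1) : ℝ),
      fun _ => trivial, fun n => ?_, ?_⟩⟩⟩
    · refine lt_of_le_of_lt (measure_union_le _ _) ?_
      rw [hν0, zero_add]
      refine hIci _ (by positivity) ?_
      rw [div_le_one (by positivity)]
      have : (0:ℝ) ≤ (n:ℝ) := Nat.cast_nonneg n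
      linarith
    · ext x
      simp only [Set.mem_iUnion, Set.mem_union, Set.mem_setOf_eq, Set.mem_Ici, Set.mem_univ,
        iff_true]
      rcases le_or_gt x 0 with hx | hx
      · exact ⟨0, Or.inl hx⟩
      · obtain ⟨n, hn⟩ := exists_nat_one_div_lt hx
        exact ⟨n, Or.inr hn.le⟩
  -- σ-finite carrier for f
  obtain ⟨t, htmeas, htzero, htsf⟩ :=
    (hf.aefinStronglyMeasurable two_ne_zero ENNReal.ofNat_ne_top).exists_set_sigmaFinite
  haveI : SigmaFinite (μ.restrict t) := htsf
  set μ' : Measure Ω := μ.restrict t with hμ'def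
  -- transfer principle
  have htrans : ∀ h : Ω → ℝ, Integrable h μ → h =ᵐ[μ.restrict tᶜ] 0 →
      ∫ ω, h ω ∂μ = ∫ ω, h ω ∂μ' := by
    intro h hhint hzero
    rw [← integral_add_compl htmeas hhint, integral_eq_zero_of_ae hzero, add_zero]
  -- integrability facts
  have hfsq : Integrable (fun ω => f ω ^ 2) μ := hf.integrable_sq
  have hafsq : Integrable (fun ω => a ω * f ω ^ 2) μ := by
    refine hform.integrable_sq.congr (Filter.Eventually.of_forall fun ω => ?_)
    show (Real.sqrt (a ω) * f ω) ^ 2 = a ω * f ω ^ 2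
    rw [mul_pow, Real.sq_sqrt (ha ω)]
  have hf2meas : AEStronglyMeasurable (fun ω => f ω ^ 2) μ := hfsq.1
  have hΦfsq : Integrable (fun ω => Φ (a ω) * f ω ^ 2) μ := by
    refine Integrable.mono ((hfsq.const_mul C).add (hafsq.const_mul (b + C))) ?_ ?_
    · exact (hΦa_meas.aestronglyMeasurable.mul hf2meas)
    · refine Filter.Eventually.of_forall fun ω => ?_
      have h1 : 0 ≤ Φ (a ω) := hΦ_nonneg _ (ha ω)
      have h2 : Φ (a ω) ≤ C + (b + C) * a ω := hΦ_le _ (ha ω)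
      have h3 : (0:ℝ) ≤ f ω ^ 2 := sq_nonneg _
      simp only [Pi.add_apply, Real.norm_eq_abs]
      rw [abs_of_nonneg (mul_nonneg h1 h3)]
      refine le_trans ?_ (le_abs_self _)
      have h5 : (C + (b + C) * a ω) * f ω ^ 2 =
          C * f ω ^ 2 + (b + C) * (a ω * f ω ^ 2) := by ring
      linarith [mul_le_mul_of_nonneg_right h2 h3]
  -- μ'-versions
  have hf' : MemLp f 2 μ' := hf.restrict t
  have hfsq' : Integrable (fun ω => f ω ^ 2) μ' := hfsq.restrict
  have hafsq' : Integrable (fun ω => a ω * f ω ^ 2) μ' := hafsq.restrict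
  -- the function ω ↦ G(a ω) * f ω ^ 2
  have hGf_eq : ∀ ω, (∫ s, ‖(1 - Real.exp (-(a ω * s))) * f ω ^ 2‖ ∂ν) =
      G (a ω) * f ω ^ 2 := by
    intro ω
    have h1 : ∫ s, ‖(1 - Real.exp (-(a ω * s))) * f ω ^ 2‖ ∂ν =
        ∫ s, (1 - Real.exp (-(a ω * s))) * f ω ^ 2 ∂ν := by
      refine integral_congr_ae (hνpos.mono fun s hs => ?_)
      simp only [Real.norm_eq_abs]
      rw [abs_of_nonneg (mul_nonneg (okura_one_sub_exp_nonneg (ha ω) hs.le) (sq_nonneg _))]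
    rw [h1, integral_mul_const]
  have hGfint' : Integrable (fun ω => G (a ω) * f ω ^ 2) μ' := by
    refine Integrable.mono ((hfsq'.const_mul C).add (hafsq'.const_mul C)) ?_ ?_
    · exact (hGa_meas.aestronglyMeasurable.mul hfsq'.1)
    · refine Filter.Eventually.of_forall fun ω => ?_
      have h1 : 0 ≤ G (a ω) := hG_nonneg _ (ha ω)
      have h2 : G (a ω) ≤ C * (1 + a ω) := hG_le _ (ha ω)
      have h3 : (0:ℝ) ≤ f ω ^ 2 := sq_nonneg _
      simp only [Pi.add_apply, Real.norm_eq_abs]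
      rw [abs_of_nonneg (mul_nonneg h1 h3)]
      refine le_trans ?_ (le_abs_self _)
      have h5 : C * (1 + a ω) * f ω ^ 2 =
          C * f ω ^ 2 + C * (a ω * f ω ^ 2) := by ring
      linarith [mul_le_mul_of_nonneg_right h2 h3]
  -- Fubini on μ' × ν
  have hFmeas : AEStronglyMeasurable
      (Function.uncurry fun ω s => (1 - Real.exp (-(a ω * s))) * f ω ^ 2) (μ'.prod ν) := by
    have h1 : Measurable fun p : Ω × ℝ => 1 - Real.exp (-(a p.1 * p.2)) :=
      measurable_const.sub (((hameas.comp measurable_fst).mul measurable_snd).neg.exp)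
    exact h1.aestronglyMeasurable.mul (hfsq'.1.comp_fst)
  have hFint : Integrable
      (Function.uncurry fun ω s => (1 - Real.exp (-(a ω * s))) * f ω ^ 2) (μ'.prod ν) := by
    rw [integrable_prod_iff hFmeas]
    constructor
    · refine Filter.Eventually.of_forall fun ω => ?_
      simp only [Function.uncurry_apply_pair]
      exact (hint (a ω) (ha ω)).mul_const _
    · refine hGfint'.congr (Filter.Eventually.of_forall fun ω => ?_)
      simp only [Function.uncurry_apply_pair]
      exact (hGf_eq ω).symm
  have hswap := integral_integral_swap hFint
  -- assemble the identity over μ'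
  have hstep1 : ∫ ω, Φ (a ω) * f ω ^ 2 ∂μ' =
      b * ∫ ω, a ω * f ω ^ 2 ∂μ' + ∫ ω, G (a ω) * f ω ^ 2 ∂μ' := by
    have heq : ∫ ω, Φ (a ω) * f ω ^ 2 ∂μ' =
        ∫ ω, (b * (a ω * f ω ^ 2) + G (a ω) * f ω ^ 2) ∂μ' := by
      refine integral_congr_ae (Filter.Eventually.of_forall fun ω => ?_)
      show Φ (a ω) * f ω ^ 2 = b * (a ω * f ω ^ 2) + G (a ω) * f ω ^ 2
      rw [hΦ]; ring
    rw [heq, integral_add (hafsq'.const_mul b) hGfint', integral_const_mul]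
  have hstep2 : ∫ ω, G (a ω) * f ω ^ 2 ∂μ' =
      ∫ s, ∫ ω, (1 - Real.exp (-(a ω * s))) * f ω ^ 2 ∂μ' ∂ν := by
    rw [← hswap]
    refine integral_congr_ae (Filter.Eventually.of_forall fun ω => ?_)
    show G (a ω) * f ω ^ 2 = ∫ s, (1 - Real.exp (-(a ω * s))) * f ω ^ 2 ∂ν
    rw [hGdef]
    exact (integral_mul_const _ _).symm
  have hstep3 : ∫ s, ∫ ω, (1 - Real.exp (-(a ω * s))) * f ω ^ 2 ∂μ' ∂ν =
      ∫ s, ∫ ω, (f ω - Real.exp (-(s * a ω)) * f ω) * f ω ∂μ' ∂ν := by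
    refine integral_congr_ae (Filter.Eventually.of_forall fun s => ?_)
    refine integral_congr_ae (Filter.Eventually.of_forall fun ω => ?_)
    show (1 - Real.exp (-(a ω * s))) * f ω ^ 2 =
      (f ω - Real.exp (-(s * a ω)) * f ω) * f ω
    rw [mul_comm (a ω) s]; ring
  -- transfers back to μ
  have htr1 : ∫ ω, Φ (a ω) * f ω ^ 2 ∂μ = ∫ ω, Φ (a ω) * f ω ^ 2 ∂μ' := by
    refine htrans _ hΦfsq (htzero.mono fun ω hω => ?_)
    simp only [Pi.zero_apply] at hω ⊢
    rw [hω]; ring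
  have htr2 : ∫ ω, a ω * f ω ^ 2 ∂μ = ∫ ω, a ω * f ω ^ 2 ∂μ' := by
    refine htrans _ hafsq (htzero.mono fun ω hω => ?_)
    simp only [Pi.zero_apply] at hω ⊢
    rw [hω]; ring
  have htr3 : ∫ s, ∫ ω, (f ω - Real.exp (-(s * a ω)) * f ω) * f ω ∂μ' ∂ν =
      ∫ s, ∫ ω, (f ω - Real.exp (-(s * a ω)) * f ω) * f ω ∂μ ∂ν := by
    refine integral_congr_ae (hνpos.mono fun s hs => ?_)
    have hintμ : Integrable (fun ω => (f ω - Real.exp (-(s * a ω)) * f ω) * f ω) μ := by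
      refine Integrable.mono hfsq ?_ ?_
      · have hm : Measurable fun ω => 1 - Real.exp (-(s * a ω)) :=
          measurable_const.sub (((measurable_const.mul hameas)).neg.exp)
        have : AEStronglyMeasurable
            (fun ω => (1 - Real.exp (-(s * a ω))) * f ω ^ 2) μ :=
          hm.aestronglyMeasurable.mul hf2meas
        refine this.congr (Filter.Eventually.of_forall fun ω => ?_)
        ring
      · refine Filter.Eventually.of_forall fun ω => ?_
        have heq : (f ω - Real.exp (-(s * a ω)) * f ω) * f ω =
            (1 - Real.exp (-(s * a ω))) * f ω ^ 2 := by ring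
        have h1 : 0 ≤ 1 - Real.exp (-(s * a ω)) := by
          have := okura_one_sub_exp_nonneg (ha ω) hs.le
          rwa [mul_comm] at this
        have h2 : 1 - Real.exp (-(s * a ω)) ≤ 1 := by
          have := Real.exp_pos (-(s * a ω)); linarith
        simp only [Real.norm_eq_abs]
        rw [heq, abs_of_nonneg (mul_nonneg h1 (sq_nonneg _)), abs_of_nonneg (sq_nonneg (f ω))]
        nlinarith [sq_nonneg (f ω)]
    refine (htrans _ hintμ (htzero.mono fun ω hω => ?_)).symm
    simp only [Pi.zero_apply] at hω ⊢
    rw [hω]; ring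
  rw [htr1, htr2, hstep1, hstep2, hstep3, htr3]
end

section
/- Let A be a nonnegative injective self-adjoint operator on a Hilbert space H and f ∈ H. The following are equivalent: (1) f belongs to the range of √A; (2) there exists C ≥ 0 such that |⟨f, u⟩| ≤ C‖√A u‖ for all u ∈ D(√A); (3) sup_{α>0} ⟨f, (α + A)^{-1} f⟩ < ∞. -/
open MeasureTheory Filter

lemma sqrt_integral_sq_eq_norm {Ω : Type} [MeasurableSpace Ω] {μ : Measure Ω}
    (g : Ω → ℝ) (hg : MemLp g 2 μ) :
    Real.sqrt (∫ ω, g ω ^ 2 ∂μ) = ‖hg.toLp g‖ := by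
  have h1 : (inner ℝ (hg.toLp g) (hg.toLp g) : ℝ) = ∫ ω, g ω ^ 2 ∂μ := by
    rw [L2.inner_def]
    refine integral_congr_ae ((hg.coeFn_toLp).mono fun ω hω => ?_)
    simp [hω, pow_two]
  rw [← h1, real_inner_self_eq_norm_sq, Real.sqrt_sq (norm_nonneg _)]

lemma integral_cauchy_schwarz {Ω : Type} [MeasurableSpace Ω] {μ : Measure Ω}
    (g h : Ω → ℝ) (hg : MemLp g 2 μ) (hh : MemLp h 2 μ) :
    |∫ ω, g ω * h ω ∂μ| ≤ Real.sqrt (∫ ω, g ω ^ 2 ∂μ) * Real.sqrt (∫ ω, h ω ^ 2 ∂μ) := by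
  have h1 : (inner ℝ (hg.toLp g) (hh.toLp h) : ℝ) = ∫ ω, g ω * h ω ∂μ := by
    rw [L2.inner_def]
    refine integral_congr_ae (((hg.coeFn_toLp).and (hh.coeFn_toLp)).mono fun ω hω => ?_)
    simp [hω.1, hω.2, mul_comm]
  rw [← h1, sqrt_integral_sq_eq_norm g hg, sqrt_integral_sq_eq_norm h hh]
  exact abs_real_inner_le_norm _ _

section main
variable {Ω : Type} [MeasurableSpace Ω] {μ : Measure Ω} {a f : Ω → ℝ}

lemma one_two (hameas : Measurable a) (ha : ∀ ω, 0 ≤ a ω) (hfmeas : Measurable f)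
    (h1 : ∃ g : Ω → ℝ, MemLp g 2 μ ∧ MemLp (fun ω => Real.sqrt (a ω) * g ω) 2 μ ∧
        f =ᵐ[μ] fun ω => Real.sqrt (a ω) * g ω) :
    ∃ C : ℝ, 0 ≤ C ∧ ∀ u : Ω → ℝ, MemLp u 2 μ →
        MemLp (fun ω => Real.sqrt (a ω) * u ω) 2 μ →
        |∫ ω, f ω * u ω ∂μ| ≤ C * Real.sqrt (∫ ω, a ω * u ω ^ 2 ∂μ) := by
  obtain ⟨g, hg2, hsag, hfeq⟩ := h1
  refine ⟨Real.sqrt (∫ ω, g ω ^ 2 ∂μ), Real.sqrt_nonneg _, fun u hu2 hsau => ?_⟩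
  have e1 : ∫ ω, f ω * u ω ∂μ = ∫ ω, g ω * (Real.sqrt (a ω) * u ω) ∂μ := by
    refine integral_congr_ae (hfeq.mono fun ω hω => ?_)
    simp only [hω]; ring
  have e2 : ∫ ω, (Real.sqrt (a ω) * u ω) ^ 2 ∂μ = ∫ ω, a ω * u ω ^ 2 ∂μ := by
    refine integral_congr_ae (Eventually.of_forall fun ω => ?_)
    simp only [mul_pow, Real.sq_sqrt (ha ω)]
  rw [e1]
  have := integral_cauchy_schwarz g (fun ω => Real.sqrt (a ω) * u ω) hg2 hsau
  rwa [e2] at this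

lemma hIα (hameas : Measurable a) (ha : ∀ ω, 0 ≤ a ω) (hfmeas : Measurable f)
    (hf : MemLp f 2 μ) {α : ℝ} (hα : 0 < α) :
    Integrable (fun ω => f ω ^ 2 / (α + a ω)) μ := by
  have hd : ∀ ω, 0 < α + a ω := fun ω => add_pos_of_pos_of_nonneg hα (ha ω)
  refine Integrable.mono' ((hf.integrable_sq).const_mul α⁻¹)
    ((hfmeas.pow_const 2).div (measurable_const.add hameas)).aestronglyMeasurable
    (Eventually.of_forall fun ω => ?_)
  rw [Real.norm_eq_abs, abs_of_nonneg (div_nonneg (sq_nonneg _) (hd ω).le),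
    div_le_iff₀ (hd ω)]
  nlinarith [inv_mul_cancel₀ hα.ne', sq_nonneg (f ω),
    mul_nonneg (mul_nonneg (inv_nonneg.2 hα.le) (sq_nonneg (f ω))) (ha ω)]

lemma two_three (hameas : Measurable a) (ha : ∀ ω, 0 ≤ a ω) (hfmeas : Measurable f)
    (hf : MemLp f 2 μ)
    (h2 : ∃ C : ℝ, 0 ≤ C ∧ ∀ u : Ω → ℝ, MemLp u 2 μ →
        MemLp (fun ω => Real.sqrt (a ω) * u ω) 2 μ →
        |∫ ω, f ω * u ω ∂μ| ≤ C * Real.sqrt (∫ ω, a ω * u ω ^ 2 ∂μ)) :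
    ∃ M : ℝ, ∀ α : ℝ, 0 < α → ∫ ω, f ω ^ 2 / (α + a ω) ∂μ ≤ M := by
  obtain ⟨C, hC, hbound⟩ := h2
  refine ⟨C ^ 2, fun α hα => ?_⟩
  have hd : ∀ ω, 0 < α + a ω := fun ω => add_pos_of_pos_of_nonneg hα (ha ω)
  set u : Ω → ℝ := fun ω => f ω / (α + a ω) with hu
  have humeas : Measurable u := hfmeas.div (measurable_const.add hameas)
  have hu2 : MemLp u 2 μ := by
    refine MemLp.of_le (hf.const_mul α⁻¹) humeas.aestronglyMeasurable
      (Eventually.of_forall fun ω => ?_)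
    simp only [hu, Real.norm_eq_abs]
    rw [abs_div, abs_of_pos (hd ω), abs_mul, abs_of_pos (inv_pos.2 hα),
      div_le_iff₀ (hd ω)]
    nlinarith [inv_mul_cancel₀ hα.ne', abs_nonneg (f ω),
      mul_nonneg (mul_nonneg (inv_nonneg.2 hα.le) (abs_nonneg (f ω))) (ha ω)]
  have hsa : ∀ ω, Real.sqrt (a ω) * Real.sqrt α ≤ α + a ω := fun ω => by
    nlinarith [sq_nonneg (Real.sqrt (a ω) - Real.sqrt α), Real.sq_sqrt (ha ω),
      Real.sq_sqrt hα.le, Real.sqrt_nonneg (a ω), Real.sqrt_nonneg α]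
  have hsau : MemLp (fun ω => Real.sqrt (a ω) * u ω) 2 μ := by
    refine MemLp.of_le (hf.const_mul (Real.sqrt α)⁻¹)
      ((hameas.sqrt.mul humeas)).aestronglyMeasurable (Eventually.of_forall fun ω => ?_)
    simp only [hu, Real.norm_eq_abs]
    rw [abs_mul, abs_mul, abs_div, abs_of_pos (hd ω),
      abs_of_nonneg (Real.sqrt_nonneg (a ω)),
      abs_of_nonneg (inv_nonneg.2 (Real.sqrt_nonneg α)), mul_div_assoc',
      div_le_iff₀ (hd ω), inv_mul_eq_div, div_mul_eq_mul_div,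
      le_div_iff₀ (Real.sqrt_pos.2 hα)]
    nlinarith [hsa ω, abs_nonneg (f ω)]
  have hIint : Integrable (fun ω => f ω ^ 2 / (α + a ω)) μ := hIα hameas ha hfmeas hf hα
  have hIa : Integrable (fun ω => a ω * u ω ^ 2) μ := by
    refine Integrable.mono' hIint
      (hameas.mul (humeas.pow_const 2)).aestronglyMeasurable (Eventually.of_forall fun ω => ?_)
    simp only [hu, Real.norm_eq_abs]
    rw [abs_of_nonneg (mul_nonneg (ha ω) (sq_nonneg _)), div_pow, mul_div_assoc',
      div_le_div_iff₀ (pow_pos (hd ω) 2) (hd ω)]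
    nlinarith [mul_nonneg (mul_nonneg (sq_nonneg (f ω)) (hd ω).le) hα.le]
  have hfu : ∫ ω, f ω * u ω ∂μ = ∫ ω, f ω ^ 2 / (α + a ω) ∂μ := by
    refine integral_congr_ae (Eventually.of_forall fun ω => ?_)
    simp only [hu]
    rw [pow_two, mul_div_assoc]
  have hIle : ∫ ω, a ω * u ω ^ 2 ∂μ ≤ ∫ ω, f ω ^ 2 / (α + a ω) ∂μ := by
    refine integral_mono hIa hIint fun ω => ?_
    simp only [hu]
    rw [div_pow, mul_div_assoc', div_le_div_iff₀ (pow_pos (hd ω) 2) (hd ω)]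
    nlinarith [mul_nonneg (mul_nonneg (sq_nonneg (f ω)) (hd ω).le) hα.le]
  have hInn : 0 ≤ ∫ ω, f ω ^ 2 / (α + a ω) ∂μ :=
    integral_nonneg fun ω => div_nonneg (sq_nonneg _) (hd ω).le
  have main := hbound u hu2 hsau
  rw [hfu, abs_of_nonneg hInn] at main
  set I := ∫ ω, f ω ^ 2 / (α + a ω) ∂μ
  have h2' : I ≤ C * Real.sqrt I :=
    le_trans main (mul_le_mul_of_nonneg_left (Real.sqrt_le_sqrt hIle) hC)
  nlinarith [Real.sq_sqrt hInn, Real.sqrt_nonneg I, sq_nonneg (Real.sqrt I - C)]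

lemma three_one (hameas : Measurable a) (ha : ∀ ω, 0 ≤ a ω)
    (hinj : ∀ᵐ ω ∂μ, 0 < a ω) (hfmeas : Measurable f) (hf : MemLp f 2 μ)
    (h3 : ∃ M : ℝ, ∀ α : ℝ, 0 < α → ∫ ω, f ω ^ 2 / (α + a ω) ∂μ ≤ M) :
    ∃ g : Ω → ℝ, MemLp g 2 μ ∧ MemLp (fun ω => Real.sqrt (a ω) * g ω) 2 μ ∧
        f =ᵐ[μ] fun ω => Real.sqrt (a ω) * g ω := by
  obtain ⟨M, hM⟩ := h3
  set g : Ω → ℝ := fun ω => f ω / Real.sqrt (a ω) with hg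
  have hgmeas : Measurable g := hfmeas.div hameas.sqrt
  -- sequence of parameters
  set c : ℕ → ℝ := fun n => (n + 1 : ℝ)⁻¹ with hc
  have hcpos : ∀ n, 0 < c n := fun n => by positivity
  have hctend : Tendsto c atTop (nhds 0) := tendsto_one_div_add_atTop_nhds_zero_nat.congr
    (fun n => by simp [hc, one_div])
  -- a.e. pointwise convergence
  have hlim : ∀ᵐ ω ∂μ, Tendsto (fun n => ENNReal.ofReal (f ω ^ 2 / (c n + a ω))) atTop
      (nhds (ENNReal.ofReal (f ω ^ 2 / a ω))) := by
    refine hinj.mono fun ω hω => ?_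
    refine (ENNReal.continuous_ofReal.tendsto _).comp ?_
    have hden : Tendsto (fun n => c n + a ω) atTop (nhds (a ω)) := by
      simpa using hctend.add (tendsto_const_nhds (x := a ω))
    exact (tendsto_const_nhds.div hden hω.ne')
  -- lintegral bound via Fatou
  have haemeas : ∀ n : ℕ, AEMeasurable (fun ω => ENNReal.ofReal (f ω ^ 2 / (c n + a ω))) μ :=
    fun n => (ENNReal.measurable_ofReal.comp
      ((hfmeas.pow_const 2).div (measurable_const.add hameas))).aemeasurable
  have hbound : ∀ n : ℕ, ∫⁻ ω, ENNReal.ofReal (f ω ^ 2 / (c n + a ω)) ∂μ ≤ ENNReal.ofReal M := by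
    intro n
    have hint := hIα hameas ha hfmeas hf (hcpos n)
    rw [← ofReal_integral_eq_lintegral_ofReal hint (Eventually.of_forall fun ω =>
      div_nonneg (sq_nonneg _) (add_pos_of_pos_of_nonneg (hcpos n) (ha ω)).le)]
    exact ENNReal.ofReal_le_ofReal (hM (c n) (hcpos n))
  have hfin : ∫⁻ ω, ENNReal.ofReal (f ω ^ 2 / a ω) ∂μ ≤ ENNReal.ofReal M := by
    have e : ∫⁻ ω, ENNReal.ofReal (f ω ^ 2 / a ω) ∂μ
        = ∫⁻ ω, liminf (fun n => ENNReal.ofReal (f ω ^ 2 / (c n + a ω))) atTop ∂μ :=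
      lintegral_congr_ae (hlim.mono fun ω hω => (hω.liminf_eq).symm)
    rw [e]
    refine le_trans (lintegral_liminf_le' haemeas) ?_
    refine le_trans (liminf_le_liminf (Eventually.of_forall hbound)) ?_
    simp [liminf_const]
  -- integrability of f^2/a
  have hint : Integrable (fun ω => f ω ^ 2 / a ω) μ := by
    refine ⟨((hfmeas.pow_const 2).div hameas).aestronglyMeasurable, ?_⟩
    rw [hasFiniteIntegral_iff_ofReal (Eventually.of_forall fun ω =>
      div_nonneg (sq_nonneg _) (ha ω))]
    exact lt_of_le_of_lt hfin ENNReal.ofReal_lt_top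
  have hg2 : MemLp g 2 μ := by
    rw [memLp_two_iff_integrable_sq hgmeas.aestronglyMeasurable]
    have : (fun ω => g ω ^ 2) = fun ω => f ω ^ 2 / a ω := by
      funext ω
      rw [hg]
      simp only [div_pow, Real.sq_sqrt (ha ω)]
    rw [this]; exact hint
  have hfeq : f =ᵐ[μ] fun ω => Real.sqrt (a ω) * g ω := by
    refine hinj.mono fun ω hω => ?_
    simp only [hg]
    rw [mul_div_cancel₀ _ (Real.sqrt_pos.2 hω).ne']
  exact ⟨g, hg2, hf.ae_eq hfeq, hfeq⟩


end main

/-- Characterization of the range of `√A` for a nonnegative injective self-adjoint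
operator `A` (realized spectrally as multiplication by a measurable function `a ≥ 0`
with `a > 0` a.e. on `L²(μ)`): for `f ∈ L²`,
(1) `f ∈ Range(√A)` iff (2) `|⟨f,u⟩| ≤ C‖√A u‖` for all `u ∈ D(√A)` and some `C`,
iff (3) `sup_{α>0} ⟨f, (α+A)⁻¹ f⟩ < ∞`. -/
theorem range_sqrt_characterization
    (Ω : Type) [MeasurableSpace Ω] (μ : Measure Ω) (a f : Ω → ℝ)
    (hameas : Measurable a) (ha : ∀ ω, 0 ≤ a ω)
    (hinj : ∀ᵐ ω ∂μ, 0 < a ω)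
    (hfmeas : Measurable f) (hf : MemLp f 2 μ) :
    ((∃ g : Ω → ℝ, MemLp g 2 μ ∧ MemLp (fun ω => Real.sqrt (a ω) * g ω) 2 μ ∧
        f =ᵐ[μ] fun ω => Real.sqrt (a ω) * g ω) ↔
      (∃ C : ℝ, 0 ≤ C ∧ ∀ u : Ω → ℝ, MemLp u 2 μ →
        MemLp (fun ω => Real.sqrt (a ω) * u ω) 2 μ →
        |∫ ω, f ω * u ω ∂μ| ≤ C * Real.sqrt (∫ ω, a ω * u ω ^ 2 ∂μ))) ∧
    ((∃ g : Ω → ℝ, MemLp g 2 μ ∧ MemLp (fun ω => Real.sqrt (a ω) * g ω) 2 μ ∧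
        f =ᵐ[μ] fun ω => Real.sqrt (a ω) * g ω) ↔
      (∃ M : ℝ, ∀ α : ℝ, 0 < α → ∫ ω, f ω ^ 2 / (α + a ω) ∂μ ≤ M)) := by
  exact ⟨⟨fun h1 => one_two hameas ha hfmeas h1,
      fun h2 => three_one hameas ha hinj hfmeas hf (two_three hameas ha hfmeas hf h2)⟩,
    ⟨fun h1 => two_three hameas ha hfmeas hf (one_two hameas ha hfmeas h1),
      fun h3 => three_one hameas ha hinj hfmeas hf h3⟩⟩
end

section
/- Let A be a nonnegative self-adjoint operator on a Hilbert space H whose associated semigroup e^{-tA} is positivity-preserving on H = L²(E;m), and let G_α = (α+A)^{-1}. Suppose g ∈ L²(E;m) is nonnegative with g ≠ 0. Then the set B = {x ∈ E : G₁g(x) = 0} satisfies: G₁(1_B f) = 0 m-a.e. on B^c for every f ∈ L²(E;m), i.e., 1_{B^c} G₁(1_B f) = 0. -/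
open MeasureTheory
open scoped ENNReal

/-- Invariant-set argument: let `T_t` be the positivity-preserving symmetric semigroup
of a nonnegative self-adjoint operator on `L²(m)` and `G₁u = ∫₀^∞ e^{-t} T_t u dt` its
`1`-resolvent. If `g ∈ L²(m)` is nonnegative and nonzero, then for
`B = {x : G₁g(x) = 0}` one has `1_{B^c} · G₁(1_B f) = 0` a.e. for every `f ∈ L²(m)`. -/
theorem resolvent_invariant_set
    (Ω : Type) [MeasurableSpace Ω] (m : Measure Ω) [SigmaFinite m]
    (T : ℝ → (Ω → ℝ) → Ω → ℝ)
    (G1 : (Ω → ℝ) → Ω → ℝ)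
    (hG1 : ∀ u : Ω → ℝ, G1 u = fun ω => ∫ t in Set.Ioi (0:ℝ), Real.exp (-t) * T t u ω)
    (hmeas : ∀ u : Ω → ℝ, Measurable u →
      Measurable (Function.uncurry fun t ω => T t u ω))
    (hpos : ∀ t : ℝ, 0 ≤ t → ∀ u : Ω → ℝ, (∀ ω, 0 ≤ u ω) → ∀ ω, 0 ≤ T t u ω)
    (hintg : ∀ u : Ω → ℝ, Measurable u → MemLp u 2 m → ∀ ω,
      IntegrableOn (fun t => Real.exp (-t) * T t u ω) (Set.Ioi 0))
    (hshift : ∀ s : ℝ, 0 ≤ s → ∀ u : Ω → ℝ,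
      T s (G1 u) = fun ω => ∫ t in Set.Ioi (0:ℝ), Real.exp (-t) * T (s + t) u ω)
    (hGsym : ∀ u v : Ω → ℝ, MemLp u 2 m → MemLp v 2 m →
      ∫ ω, G1 u ω * v ω ∂m = ∫ ω, u ω * G1 v ω ∂m)
    (hGcontr : ∀ u : Ω → ℝ, MemLp u 2 m → MemLp (G1 u) 2 m)
    (g : Ω → ℝ) (hgmeas : Measurable g) (hgL2 : MemLp g 2 m)
    (hgpos : ∀ ω, 0 ≤ g ω) (hgne : ¬ g =ᵐ[m] 0) :
    ∀ f : Ω → ℝ, Measurable f → MemLp f 2 m →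
      ∀ᵐ ω ∂m, G1 g ω ≠ 0 → G1 (Set.indicator {x | G1 g x = 0} f) ω = 0 := by
  intro f hfmeas hfL2
  -- products of L² functions are integrable
  have hmul : ∀ u v : Ω → ℝ, MemLp u 2 m → MemLp v 2 m →
      Integrable (fun ω => u ω * v ω) m := by
    intro u v hu hv
    have h : (1 : ℝ≥0∞) / 1 = 1 / 2 + 1 / 2 := by
      rw [ENNReal.div_add_div_same]; norm_num [ENNReal.div_self]
    exact memLp_one_iff_integrable.mp (hv.smul (r := 1) hu)
  -- measurability of G1 g
  have hTg : Measurable (Function.uncurry fun t ω => T t g ω) := hmeas g hgmeas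
  have hG1gm : Measurable (G1 g) := by
    rw [hG1]
    have hFm : Measurable (fun p : ℝ × Ω => Real.exp (-p.1) * T p.1 g p.2) :=
      (measurable_fst.neg.exp).mul hTg
    exact hFm.stronglyMeasurable.integral_prod_left'.measurable
  have hBmeas : MeasurableSet {x | G1 g x = 0} := hG1gm (measurableSet_singleton 0)
  -- G1 preserves nonnegativity (pointwise)
  have hG1pos : ∀ u : Ω → ℝ, (∀ ω, 0 ≤ u ω) → ∀ ω, 0 ≤ G1 u ω := by
    intro u hu ω
    rw [congrFun (hG1 u) ω]
    refine setIntegral_nonneg measurableSet_Ioi fun t ht => ?_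
    exact mul_nonneg (Real.exp_nonneg _) (hpos t (le_of_lt ht) u hu ω)
  -- on B, the semigroup kills G1 g, hence G1 (G1 g) = 0 on B
  have hTGg : ∀ ω, G1 g ω = 0 → ∀ s : ℝ, 0 ≤ s → T s (G1 g) ω = 0 := by
    intro ω hω s hs
    have hslice : Measurable fun t => T t g ω :=
      hTg.comp (measurable_id.prodMk measurable_const)
    have hint : IntegrableOn (fun t => Real.exp (-t) * T t g ω) (Set.Ioi 0) :=
      hintg g hgmeas hgL2 ω
    have hnn : 0 ≤ᵐ[volume.restrict (Set.Ioi (0:ℝ))] fun t => Real.exp (-t) * T t g ω := by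
      filter_upwards [ae_restrict_mem measurableSet_Ioi] with t ht
      exact mul_nonneg (Real.exp_nonneg _) (hpos t ht.le g hgpos ω)
    have hzero : ∫ t in Set.Ioi (0:ℝ), Real.exp (-t) * T t g ω = 0 := by
      rw [← congrFun (hG1 g) ω]; exact hω
    have hae : (fun t => Real.exp (-t) * T t g ω) =ᵐ[volume.restrict (Set.Ioi (0:ℝ))] 0 :=
      (integral_eq_zero_iff_of_nonneg_ae hnn hint).mp hzero
    have hae2 : ∀ᵐ t ∂(volume.restrict (Set.Ioi (0:ℝ))), T t g ω = 0 := by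
      filter_upwards [hae] with t ht
      have ht' : Real.exp (-t) * T t g ω = 0 := ht
      exact (mul_eq_zero.mp ht').resolve_left (Real.exp_pos _).ne'
    -- the exceptional set has measure zero
    have hN : volume ({t : ℝ | T t g ω ≠ 0} ∩ Set.Ioi 0) = 0 := by
      have := hae2
      rw [ae_iff] at this
      rw [Measure.restrict_apply (by exact hslice (measurableSet_singleton 0).compl)] at this
      exact this
    have hpre : volume ((fun t => s + t) ⁻¹' ({t : ℝ | T t g ω ≠ 0} ∩ Set.Ioi 0)) = 0 := by
      rw [measure_preimage_add]; exact hN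
    have hae3 : ∀ᵐ t ∂(volume.restrict (Set.Ioi (0:ℝ))), Real.exp (-t) * T (s + t) g ω = 0 := by
      rw [ae_restrict_iff' measurableSet_Ioi, ae_iff]
      refine measure_mono_null ?_ hpre
      intro t ht
      simp only [Set.mem_setOf_eq, Classical.not_imp] at ht
      obtain ⟨ht0, hne⟩ := ht
      have ht0' : (0:ℝ) < t := Set.mem_Ioi.mp ht0
      refine Set.mem_preimage.mpr ⟨?_, ?_⟩
      · show T (s + t) g ω ≠ 0
        intro hzz; exact hne (by rw [hzz, mul_zero])
      · show s + t ∈ Set.Ioi (0:ℝ)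
        exact Set.mem_Ioi.mpr (by linarith)
    rw [congrFun (hshift s hs g) ω]
    exact integral_eq_zero_of_ae (by filter_upwards [hae3] with t ht using ht)
  have hGGg : ∀ ω, G1 g ω = 0 → G1 (G1 g) ω = 0 := by
    intro ω hω
    rw [congrFun (hG1 (G1 g)) ω]
    refine integral_eq_zero_of_ae ?_
    refine (ae_restrict_iff' measurableSet_Ioi).2 (ae_of_all _ fun s hs => ?_)
    have : T s (G1 g) ω = 0 := hTGg ω hω s (le_of_lt (Set.mem_Ioi.mp hs))
    show Real.exp (-s) * T s (G1 g) ω = 0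
    rw [this, mul_zero]
  -- main step for nonnegative u
  have key : ∀ u : Ω → ℝ, Measurable u → MemLp u 2 m → (∀ ω, 0 ≤ u ω) →
      ∀ᵐ ω ∂m, G1 g ω ≠ 0 → G1 (Set.indicator {x | G1 g x = 0} u) ω = 0 := by
    intro u humeas huL2 hupos
    have hwL2 : MemLp (Set.indicator {x | G1 g x = 0} u) 2 m := huL2.indicator hBmeas
    have hwpos : ∀ ω, 0 ≤ Set.indicator {x | G1 g x = 0} u ω :=
      fun ω => Set.indicator_nonneg (fun x _ => hupos x) ω
    have hsym := hGsym (Set.indicator {x | G1 g x = 0} u) (G1 g) hwL2 (hGcontr g hgL2)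
    have hrhs : ∫ ω, Set.indicator {x | G1 g x = 0} u ω * G1 (G1 g) ω ∂m = 0 := by
      have hzero : ∀ ω, Set.indicator {x | G1 g x = 0} u ω * G1 (G1 g) ω = 0 := by
        intro ω
        by_cases hω : G1 g ω = 0
        · rw [hGGg ω hω, mul_zero]
        · rw [Set.indicator_of_notMem (by exact hω), zero_mul]
      simp only [hzero, integral_zero]
    have hiz : ∫ ω, G1 (Set.indicator {x | G1 g x = 0} u) ω * G1 g ω ∂m = 0 := by
      rw [hsym]; exact hrhs
    have hnn : 0 ≤ᵐ[m] fun ω => G1 (Set.indicator {x | G1 g x = 0} u) ω * G1 g ω :=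
      ae_of_all _ fun ω => mul_nonneg (hG1pos _ hwpos ω) (hG1pos g hgpos ω)
    have hint : Integrable (fun ω => G1 (Set.indicator {x | G1 g x = 0} u) ω * G1 g ω) m :=
      hmul _ _ (hGcontr _ hwL2) (hGcontr g hgL2)
    have := (integral_eq_zero_iff_of_nonneg_ae hnn hint).mp hiz
    filter_upwards [this] with ω hω hne
    have hω' : G1 (Set.indicator {x | G1 g x = 0} u) ω * G1 g ω = 0 := hω
    exact (mul_eq_zero.mp hω').resolve_right hne
  -- positive and negative parts of f
  set fp : Ω → ℝ := fun ω => max (f ω) 0 with hfp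
  set fm : Ω → ℝ := fun ω => max (-f ω) 0 with hfm
  have hfpm : Measurable fp := hfmeas.max measurable_const
  have hfmm : Measurable fm := hfmeas.neg.max measurable_const
  have hfpL2 : MemLp fp 2 m := hfL2.pos_part
  have hfmL2 : MemLp fm 2 m := hfL2.neg_part
  have hfppos : ∀ ω, 0 ≤ fp ω := fun ω => le_max_right _ _
  have hfmpos : ∀ ω, 0 ≤ fm ω := fun ω => le_max_right _ _
  -- indicator functions
  have hwfL2 : MemLp (Set.indicator {x | G1 g x = 0} f) 2 m := hfL2.indicator hBmeas
  have hwpL2 : MemLp (Set.indicator {x | G1 g x = 0} fp) 2 m := hfpL2.indicator hBmeas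
  have hwmL2 : MemLp (Set.indicator {x | G1 g x = 0} fm) 2 m := hfmL2.indicator hBmeas
  have hGf : MemLp (G1 (Set.indicator {x | G1 g x = 0} f)) 2 m := hGcontr _ hwfL2
  have hGp : MemLp (G1 (Set.indicator {x | G1 g x = 0} fp)) 2 m := hGcontr _ hwpL2
  have hGm : MemLp (G1 (Set.indicator {x | G1 g x = 0} fm)) 2 m := hGcontr _ hwmL2
  -- the deficiency of weak linearity
  set h : Ω → ℝ := fun ω => G1 (Set.indicator {x | G1 g x = 0} f) ω
      - G1 (Set.indicator {x | G1 g x = 0} fp) ω + G1 (Set.indicator {x | G1 g x = 0} fm) ω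
      with hhdef
  have hhL2 : MemLp h 2 m := (hGf.sub hGp).add hGm
  have hG1h : MemLp (G1 h) 2 m := hGcontr _ hhL2
  -- indicator of f decomposes pointwise
  have hdecomp : ∀ ω, Set.indicator {x | G1 g x = 0} f ω
      = Set.indicator {x | G1 g x = 0} fp ω - Set.indicator {x | G1 g x = 0} fm ω := by
    intro ω
    by_cases hω : G1 g ω = 0
    · rw [Set.indicator_of_mem (by exact hω), Set.indicator_of_mem (by exact hω),
        Set.indicator_of_mem (by exact hω)]
      simp only [hfp, hfm]
      rw [max_zero_sub_max_neg_zero_eq_self]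
    · rw [Set.indicator_of_notMem (by exact hω), Set.indicator_of_notMem (by exact hω),
        Set.indicator_of_notMem (by exact hω)]
      ring
  -- ∫ h² = 0
  have hsq : ∫ ω, h ω * h ω ∂m = 0 := by
    have e1 : ∫ ω, h ω * h ω ∂m
        = (∫ ω, G1 (Set.indicator {x | G1 g x = 0} f) ω * h ω ∂m
          - ∫ ω, G1 (Set.indicator {x | G1 g x = 0} fp) ω * h ω ∂m)
          + ∫ ω, G1 (Set.indicator {x | G1 g x = 0} fm) ω * h ω ∂m := by
      calc ∫ ω, h ω * h ω ∂m
          = ∫ ω, (G1 (Set.indicator {x | G1 g x = 0} f) ω * h ω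
              - G1 (Set.indicator {x | G1 g x = 0} fp) ω * h ω)
              + G1 (Set.indicator {x | G1 g x = 0} fm) ω * h ω ∂m := by
            refine integral_congr_ae (ae_of_all _ fun ω => ?_)
            simp only [hhdef]; ring
        _ = ∫ ω, G1 (Set.indicator {x | G1 g x = 0} f) ω * h ω
              - G1 (Set.indicator {x | G1 g x = 0} fp) ω * h ω ∂m
            + ∫ ω, G1 (Set.indicator {x | G1 g x = 0} fm) ω * h ω ∂m := by
            exact integral_add ((hmul _ _ hGf hhL2).sub (hmul _ _ hGp hhL2)) (hmul _ _ hGm hhL2)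
        _ = (∫ ω, G1 (Set.indicator {x | G1 g x = 0} f) ω * h ω ∂m
          - ∫ ω, G1 (Set.indicator {x | G1 g x = 0} fp) ω * h ω ∂m)
          + ∫ ω, G1 (Set.indicator {x | G1 g x = 0} fm) ω * h ω ∂m := by
            rw [integral_sub (hmul _ _ hGf hhL2) (hmul _ _ hGp hhL2)]
    have e2 : ∫ ω, Set.indicator {x | G1 g x = 0} f ω * G1 h ω ∂m
        = ∫ ω, Set.indicator {x | G1 g x = 0} fp ω * G1 h ω ∂m
          - ∫ ω, Set.indicator {x | G1 g x = 0} fm ω * G1 h ω ∂m := by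
      rw [← integral_sub (hmul _ _ hwpL2 hG1h) (hmul _ _ hwmL2 hG1h)]
      refine integral_congr_ae (ae_of_all _ fun ω => ?_)
      simp only [Pi.sub_apply]
      rw [hdecomp ω]; ring
    rw [e1, hGsym _ _ hwfL2 hhL2, hGsym _ _ hwpL2 hhL2, hGsym _ _ hwmL2 hhL2, e2]
    ring
  have hhzero : ∀ᵐ ω ∂m, h ω = 0 := by
    have hnn : 0 ≤ᵐ[m] fun ω => h ω * h ω := ae_of_all _ fun ω => mul_self_nonneg _
    have := (integral_eq_zero_iff_of_nonneg_ae hnn (hmul _ _ hhL2 hhL2)).mp hsq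
    filter_upwards [this] with ω hω
    have hω' : h ω * h ω = 0 := hω
    exact mul_self_eq_zero.mp hω'
  filter_upwards [key fp hfpm hfpL2 hfppos, key fm hfmm hfmL2 hfmpos, hhzero]
    with ω h1 h2 h3 hne
  have h1' := h1 hne
  have h2' := h2 hne
  simp only [hhdef] at h3
  rw [h1', h2'] at h3
  linarith
end

section
/- Let A be a nonnegative self-adjoint operator on a Hilbert space H, T_t = e^{-tA}, and define G f = ∫₀^∞ T_t f dt ∈ [0,∞]-valued pairing ⟨f, Gf⟩ = ∫₀^∞ ⟨f, T_t f⟩ dt for f ∈ H. Then sup{ ⟨f, u⟩ / ‖√A u‖ : u ∈ D(√A), √A u ≠ 0, ⟨f,u⟩ ≥ 0 }² = ⟨f, Gf⟩, for any f ∈ H with f ≥ 0 in the sense that ⟨f, T_t f⟩ ≥ 0 for all t; more precisely, ⟨f, Gf⟩ = ∫_{(0,∞)} λ^{-1} d⟨E_λ f, f⟩ ∈ [0,∞] (where E is the spectral measure of A, and the value is +∞ if f has spectral mass at 0), and this quantity is finite if and only if there is C with |⟨f,u⟩| ≤ C‖√A u‖ for all u ∈ D(√A), in which case the optimal C² equals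 ⟨f, Gf⟩. -/
open MeasureTheory ENNReal

lemma expInt {c : ℝ} (hc : 0 ≤ c) :
    ∫⁻ t in Set.Ioi (0:ℝ), ENNReal.ofReal (Real.exp (-(t * c))) = (ENNReal.ofReal c)⁻¹ := by
  rcases hc.eq_or_lt with h | h
  · simp [← h, Real.volume_Ioi]
  · have hInt : IntegrableOn (fun t => Real.exp (-(t * c))) (Set.Ioi 0) := by
      simpa [neg_mul, mul_comm] using exp_neg_integrableOn_Ioi 0 h
    rw [← ofReal_integral_eq_lintegral_ofReal hInt
      (Filter.Eventually.of_forall fun t => (Real.exp_pos _).le)]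
    have h2 : (∫ t in Set.Ioi (0:ℝ), Real.exp (-(t * c))) = c⁻¹ := by
      have h3 := integral_comp_mul_right_Ioi (fun y => Real.exp (-y)) 0 h
      simp only [zero_mul, integral_exp_neg_Ioi, neg_zero, Real.exp_zero, smul_eq_mul,
        mul_one] at h3
      exact h3
    rw [h2, ENNReal.ofReal_inv_of_pos h]

lemma green_eq (Ω : Type) [MeasurableSpace Ω] (μ : Measure Ω)
    (a f : Ω → ℝ) (hameas : Measurable a) (ha : ∀ ω, 0 ≤ a ω)
    (hfmeas : Measurable f) (hf : MemLp f 2 μ) :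
    (∫⁻ t in Set.Ioi (0:ℝ),
        ENNReal.ofReal (∫ ω, Real.exp (-(t * a ω)) * f ω ^ 2 ∂μ))
      = ∫⁻ ω, ENNReal.ofReal (f ω ^ 2) / ENNReal.ofReal (a ω) ∂μ := by
  have hsq : Integrable (fun ω => f ω ^ 2) μ := hf.integrable_sq
  have hFin := hf.aefinStronglyMeasurable two_ne_zero ENNReal.ofNat_ne_top
  set s := hFin.sigmaFiniteSet with hs_def
  have hsm : MeasurableSet s := hFin.measurableSet
  have hz : f =ᵐ[μ.restrict sᶜ] 0 := hFin.ae_eq_zero_compl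
  have hEmeas : ∀ t : ℝ, Measurable (fun ω => Real.exp (-(t * a ω)) * f ω ^ 2) := fun t =>
    ((hameas.const_mul t).neg.exp).mul (hfmeas.pow_const 2)
  have hintE : ∀ t : ℝ, 0 ≤ t → Integrable (fun ω => Real.exp (-(t * a ω)) * f ω ^ 2) μ := by
    intro t ht
    refine hsq.mono' (hEmeas t).aestronglyMeasurable (Filter.Eventually.of_forall fun ω => ?_)
    rw [Real.norm_eq_abs, abs_mul, abs_of_pos (Real.exp_pos _), abs_of_nonneg (sq_nonneg _)]
    have h1 : Real.exp (-(t * a ω)) ≤ 1 :=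
      Real.exp_le_one_iff.mpr (neg_nonpos.mpr (mul_nonneg ht (ha ω)))
    nlinarith [sq_nonneg (f ω)]
  have hEzero : ∀ t : ℝ, (fun ω => Real.exp (-(t * a ω)) * f ω ^ 2) =ᵐ[μ.restrict sᶜ] 0 := by
    intro t
    filter_upwards [hz] with ω hω
    simp [hω]
  have step1 : ∀ t : ℝ, 0 < t →
      ENNReal.ofReal (∫ ω, Real.exp (-(t * a ω)) * f ω ^ 2 ∂μ)
        = ∫⁻ ω, ENNReal.ofReal (Real.exp (-(t * a ω)) * f ω ^ 2) ∂(μ.restrict s) := by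
    intro t ht
    have hμeq : (∫ ω, Real.exp (-(t * a ω)) * f ω ^ 2 ∂μ)
        = ∫ ω, Real.exp (-(t * a ω)) * f ω ^ 2 ∂(μ.restrict s) := by
      conv_lhs => rw [← Measure.restrict_add_restrict_compl (μ := μ) hsm]
      rw [integral_add_measure ((hintE t ht.le).restrict) ((hintE t ht.le).restrict),
        integral_eq_zero_of_ae (hEzero t), add_zero]
    rw [hμeq, ofReal_integral_eq_lintegral_ofReal ((hintE t ht.le).restrict)
      (Filter.Eventually.of_forall fun ω => mul_nonneg (Real.exp_pos _).le (sq_nonneg _))]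
  calc (∫⁻ t in Set.Ioi (0:ℝ),
        ENNReal.ofReal (∫ ω, Real.exp (-(t * a ω)) * f ω ^ 2 ∂μ))
      = ∫⁻ t in Set.Ioi (0:ℝ), ∫⁻ ω, ENNReal.ofReal (Real.exp (-(t * a ω)) * f ω ^ 2)
          ∂(μ.restrict s) := by
        refine setLIntegral_congr_fun measurableSet_Ioi
          (fun t ht => step1 t ht)
    _ = ∫⁻ ω in s, (∫⁻ t in Set.Ioi (0:ℝ),
          ENNReal.ofReal (Real.exp (-(t * a ω)) * f ω ^ 2)) ∂μ := by
        refine lintegral_lintegral_swap ?_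
        refine (ENNReal.measurable_ofReal.comp ?_).aemeasurable
        exact ((measurable_fst.mul (hameas.comp measurable_snd)).neg.exp).mul
          ((hfmeas.comp measurable_snd).pow_const 2)
    _ = ∫⁻ ω in s, ENNReal.ofReal (f ω ^ 2) / ENNReal.ofReal (a ω) ∂μ := by
        refine lintegral_congr fun ω => ?_
        have : ∀ t : ℝ, ENNReal.ofReal (Real.exp (-(t * a ω)) * f ω ^ 2)
            = ENNReal.ofReal (f ω ^ 2) * ENNReal.ofReal (Real.exp (-(t * a ω))) := fun t => by
          rw [ENNReal.ofReal_mul (Real.exp_pos _).le, mul_comm]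
        simp_rw [this]
        rw [lintegral_const_mul' _ _ ENNReal.ofReal_ne_top, expInt (ha ω), ← div_eq_mul_inv]
    _ = ∫⁻ ω, ENNReal.ofReal (f ω ^ 2) / ENNReal.ofReal (a ω) ∂μ := by
        conv_rhs => rw [← Measure.restrict_add_restrict_compl (μ := μ) hsm]
        rw [lintegral_add_measure]
        have : ∫⁻ ω, ENNReal.ofReal (f ω ^ 2) / ENNReal.ofReal (a ω) ∂(μ.restrict sᶜ) = 0 := by
          rw [lintegral_congr_ae (g := fun _ => 0), lintegral_zero]
          filter_upwards [hz] with ω hω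
          simp [hω]
        rw [this, add_zero]

/-- The variational identity behind subcriticality: for a nonnegative self-adjoint
operator `A` (multiplication by a measurable `a ≥ 0` on `L²(μ)`) and `0 ≤ f ∈ L²(μ)`,
`⟨f, Gf⟩ := ∫₀^∞ ⟨f, e^{-tA} f⟩ dt` equals `∫ λ⁻¹ d⟨E_λ f, f⟩ ∈ [0,∞]` (the value being
`∞` if `f` has spectral mass at `0`); it is finite iff there is `C` with
`|⟨f,u⟩| ≤ C‖√A u‖` for all `u ∈ D(√A)`, and then the optimal `C²` equals `⟨f, Gf⟩`. -/
theorem green_pairing_variational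
    (Ω : Type) [MeasurableSpace Ω] (μ : Measure Ω)
    (a f : Ω → ℝ) (hameas : Measurable a) (ha : ∀ ω, 0 ≤ a ω)
    (hfmeas : Measurable f) (hf : MemLp f 2 μ) (hfpos : ∀ ω, 0 ≤ f ω) :
    ∀ (Gval : ℝ≥0∞) (Bdd : ℝ → Prop),
      Gval = (∫⁻ t in Set.Ioi (0:ℝ),
        ENNReal.ofReal (∫ ω, Real.exp (-(t * a ω)) * f ω ^ 2 ∂μ)) →
      (∀ C : ℝ, Bdd C ↔ ∀ u : Ω → ℝ, MemLp u 2 μ →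
        MemLp (fun ω => Real.sqrt (a ω) * u ω) 2 μ →
        |∫ ω, f ω * u ω ∂μ| ≤ C * Real.sqrt (∫ ω, a ω * u ω ^ 2 ∂μ)) →
      (Gval = ∫⁻ ω, ENNReal.ofReal (f ω ^ 2) / ENNReal.ofReal (a ω) ∂μ) ∧
      (Gval ≠ ⊤ ↔ ∃ C : ℝ, 0 ≤ C ∧ Bdd C) ∧
      (Gval ≠ ⊤ → IsLeast {C : ℝ | 0 ≤ C ∧ Bdd C} (Real.sqrt Gval.toReal)) := by
  intro Gval Bdd hG hBdd
  have hsq : Integrable (fun ω => f ω ^ 2) μ := hf.integrable_sq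
  have part1 : Gval = ∫⁻ ω, ENNReal.ofReal (f ω ^ 2) / ENNReal.ofReal (a ω) ∂μ := by
    rw [hG]; exact green_eq Ω μ a f hameas ha hfmeas hf
  -- the truncation sets
  set An : ℕ → Set Ω := fun n => {ω | ((n:ℝ)+1)⁻¹ ≤ a ω} with hAn_def
  have hAnm : ∀ n, MeasurableSet (An n) := by
    intro n
    simp only [hAn_def]
    exact measurableSet_le measurable_const hameas
  have hAmono : Monotone An := by
    intro m n hmn ω hω
    simp only [hAn_def, Set.mem_setOf_eq] at hω ⊢
    refine le_trans ?_ hω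
    have h1 : (0:ℝ) < (m:ℝ) + 1 := by positivity
    gcongr
  have hApos : ∀ n ω, ω ∈ An n → 0 < a ω := fun n ω hω =>
    lt_of_lt_of_le (by positivity) hω
  set q : Ω → ℝ := fun ω => f ω ^ 2 / a ω with hq_def
  have hqnn : ∀ ω, 0 ≤ q ω := fun ω => div_nonneg (sq_nonneg _) (ha ω)
  have hqmeas : Measurable q := (hfmeas.pow_const 2).div hameas
  have hqbound : ∀ n ω, (An n).indicator q ω ≤ ((n:ℝ)+1) * f ω ^ 2 := by
    intro n ω
    by_cases hω : ω ∈ An n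
    · rw [Set.indicator_of_mem hω]
      have hpos := hApos n ω hω
      have hinv : (a ω)⁻¹ ≤ (n:ℝ)+1 := by
        rw [← inv_inv ((n:ℝ)+1)]
        exact inv_anti₀ (by positivity) hω
      calc q ω = f ω ^ 2 * (a ω)⁻¹ := div_eq_mul_inv _ _
        _ ≤ f ω ^ 2 * ((n:ℝ)+1) := mul_le_mul_of_nonneg_left hinv (sq_nonneg _)
        _ = ((n:ℝ)+1) * f ω ^ 2 := mul_comm _ _
    · rw [Set.indicator_of_notMem hω]
      positivity
  have hIint : ∀ n, Integrable ((An n).indicator q) μ := by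
    intro n
    refine (hsq.const_mul ((n:ℝ)+1)).mono'
      ((hqmeas.indicator (hAnm n)).aestronglyMeasurable)
      (Filter.Eventually.of_forall fun ω => ?_)
    rw [Real.norm_eq_abs, abs_of_nonneg (Set.indicator_nonneg (fun ω _ => hqnn ω) ω)]
    exact hqbound n ω
  set I : ℕ → ℝ := fun n => ∫ ω, (An n).indicator q ω ∂μ with hI_def
  have hInn : ∀ n, 0 ≤ I n := fun n =>
    integral_nonneg (fun ω => Set.indicator_nonneg (fun ω _ => hqnn ω) ω)
  -- the ENNReal truncations
  set g : ℕ → Ω → ℝ≥0∞ := fun n ω => ENNReal.ofReal ((An n).indicator q ω) with hg_def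
  have hgmeas : ∀ n, Measurable (g n) := fun n =>
    ENNReal.measurable_ofReal.comp (hqmeas.indicator (hAnm n))
  have hgmono : Monotone g := by
    intro m n hmn ω
    exact ENNReal.ofReal_le_ofReal
      (Set.indicator_le_indicator_of_subset (hAmono hmn) (fun ω => hqnn ω) ω)
  have hglint : ∀ n, ∫⁻ ω, g n ω ∂μ = ENNReal.ofReal (I n) := fun n =>
    (ofReal_integral_eq_lintegral_ofReal (hIint n)
      (Filter.Eventually.of_forall fun ω => Set.indicator_nonneg (fun ω _ => hqnn ω) ω)).symm
  have hsup : ∀ ω, (a ω = 0 → f ω = 0) →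
      (⨆ n, g n ω) = ENNReal.ofReal (f ω ^ 2) / ENNReal.ofReal (a ω) := by
    intro ω hω
    rcases (ha ω).eq_or_lt with h0 | hpos
    · have hf0 : f ω = 0 := hω h0.symm
      have : ∀ n, g n ω = 0 := by
        intro n
        have : ω ∉ An n := by
          simp only [hAn_def, Set.mem_setOf_eq, not_le, ← h0]
          positivity
        simp [hg_def, Set.indicator_of_notMem this]
      simp [this, hf0, ← h0]
    · obtain ⟨n, hn⟩ := exists_nat_gt (a ω)⁻¹
      have hmem : ω ∈ An n := by
        have : ((n:ℝ)+1)⁻¹ ≤ a ω := by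
          rw [inv_le_comm₀ (show (0:ℝ) < (n:ℝ)+1 by positivity) hpos]
          exact le_trans hn.le (by linarith)
        exact this
      have hval : ∀ n, ω ∈ An n → g n ω
          = ENNReal.ofReal (f ω ^ 2) / ENNReal.ofReal (a ω) := by
        intro m hm
        rw [hg_def]
        simp only
        rw [Set.indicator_of_mem hm, hq_def]
        exact ENNReal.ofReal_div_of_pos hpos
      refine le_antisymm (iSup_le fun m => ?_) ?_
      · by_cases hm : ω ∈ An m
        · exact (hval m hm).le
        · simp [hg_def, Set.indicator_of_notMem hm]
      · rw [← hval n hmem]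
        exact le_iSup (fun n => g n ω) n
  have hkey : (∀ᵐ ω ∂μ, a ω = 0 → f ω = 0) → Gval = ⨆ n, ENNReal.ofReal (I n) := by
    intro hvan
    rw [part1, lintegral_congr_ae (g := fun ω => ⨆ n, g n ω) ?_, lintegral_iSup hgmeas hgmono]
    · exact iSup_congr hglint
    · filter_upwards [hvan] with ω hω
      exact (hsup ω hω).symm
  -- Bdd implies vanishing on {a = 0}
  have hvanB : ∀ C : ℝ, Bdd C → ∀ᵐ ω ∂μ, a ω = 0 → f ω = 0 := by
    intro C hC
    have hB := (hBdd C).1 hC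
    set S : Set Ω := {ω | a ω = 0} with hS_def
    have hSm : MeasurableSet S := hameas (measurableSet_singleton 0)
    set u : Ω → ℝ := S.indicator f with hu_def
    have hu2 : MemLp u 2 μ := hf.indicator hSm
    have hsqu : (fun ω => Real.sqrt (a ω) * u ω) = fun _ => (0:ℝ) := by
      funext ω
      by_cases hω : ω ∈ S
      · have : a ω = 0 := hω
        simp [this]
      · simp [hu_def, Set.indicator_of_notMem hω]
    have hsu : MemLp (fun ω => Real.sqrt (a ω) * u ω) 2 μ := by
      rw [hsqu]; exact MemLp.zero'
    have hzero : (fun ω => a ω * u ω ^ 2) = fun _ => (0:ℝ) := by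
      funext ω
      by_cases hω : ω ∈ S
      · have : a ω = 0 := hω
        simp [this]
      · simp [hu_def, Set.indicator_of_notMem hω]
    have hfu : (fun ω => f ω * u ω) = S.indicator (fun ω => f ω ^ 2) := by
      funext ω
      by_cases hω : ω ∈ S
      · simp [hu_def, Set.indicator_of_mem hω, sq]
      · simp [hu_def, Set.indicator_of_notMem hω]
    have hle := hB u hu2 hsu
    rw [hzero] at hle
    simp only [integral_zero, Real.sqrt_zero, mul_zero] at hle
    have hint0 : ∫ ω, S.indicator (fun ω => f ω ^ 2) ω ∂μ = 0 := by
      have h0 : ∫ ω, f ω * u ω ∂μ = 0 :=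
        abs_eq_zero.mp (le_antisymm hle (abs_nonneg _))
      rw [← h0]
      exact integral_congr_ae (Filter.Eventually.of_forall fun ω => (congrFun hfu ω).symm)
    have hae := (integral_eq_zero_iff_of_nonneg
      (fun ω => Set.indicator_nonneg (fun ω _ => sq_nonneg (f ω)) ω)
      (hsq.indicator hSm)).1 hint0
    filter_upwards [hae] with ω hω h0
    have hmem : ω ∈ S := h0
    rw [Set.indicator_of_mem hmem] at hω
    exact (pow_eq_zero_iff two_ne_zero).mp hω
  -- Bdd implies the truncated integrals are bounded by C^2
  have hIle : ∀ C : ℝ, 0 ≤ C → Bdd C → ∀ n, I n ≤ C ^ 2 := by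
    intro C hC0 hC n
    have hB := (hBdd C).1 hC
    set u : Ω → ℝ := (An n).indicator (fun ω => f ω / a ω) with hu_def
    have humeas : Measurable u := (hfmeas.div hameas).indicator (hAnm n)
    have huabs : ∀ ω, |u ω| ≤ ((n:ℝ)+1) * |f ω| := by
      intro ω
      by_cases hω : ω ∈ An n
      · simp only [hu_def, Set.indicator_of_mem hω]
        have hpos := hApos n ω hω
        have hinv : (a ω)⁻¹ ≤ (n:ℝ)+1 := by
          rw [← inv_inv ((n:ℝ)+1)]
          exact inv_anti₀ (by positivity) hω
        rw [abs_div, abs_of_pos hpos, div_eq_mul_inv]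
        calc |f ω| * (a ω)⁻¹ ≤ |f ω| * ((n:ℝ)+1) :=
              mul_le_mul_of_nonneg_left hinv (abs_nonneg _)
          _ = ((n:ℝ)+1) * |f ω| := mul_comm _ _
      · simp only [hu_def, Set.indicator_of_notMem hω, abs_zero]
        positivity
    have hu2 : MemLp u 2 μ := by
      refine (memLp_two_iff_integrable_sq humeas.aestronglyMeasurable).2 ?_
      refine (hsq.const_mul (((n:ℝ)+1)^2)).mono' (humeas.pow_const 2).aestronglyMeasurable
        (Filter.Eventually.of_forall fun ω => ?_)
      rw [Real.norm_eq_abs, abs_of_nonneg (sq_nonneg _)]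
      calc u ω ^ 2 = |u ω| ^ 2 := (sq_abs _).symm
        _ ≤ (((n:ℝ)+1) * |f ω|) ^ 2 := pow_le_pow_left₀ (abs_nonneg _) (huabs ω) 2
        _ = ((n:ℝ)+1)^2 * f ω ^ 2 := by rw [mul_pow, sq_abs]
    have hau2 : (fun ω => a ω * u ω ^ 2) = (An n).indicator q := by
      funext ω
      by_cases hω : ω ∈ An n
      · have hpos := hApos n ω hω
        have hane : a ω ≠ 0 := hpos.ne'
        simp only [hu_def, hq_def, Set.indicator_of_mem hω]
        field_simp
      · simp only [hu_def, Set.indicator_of_notMem hω]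
        ring
    have hsu : MemLp (fun ω => Real.sqrt (a ω) * u ω) 2 μ := by
      refine (memLp_two_iff_integrable_sq
        (((hameas.sqrt).mul humeas).aestronglyMeasurable)).2 ?_
      have heq : (fun ω => (Real.sqrt (a ω) * u ω) ^ 2) = (An n).indicator q := by
        rw [← hau2]
        funext ω
        rw [mul_pow, Real.sq_sqrt (ha ω)]
      change Integrable (fun ω => (Real.sqrt (a ω) * u ω) ^ 2) μ; rw [heq]
      exact hIint n
    have hfu : (fun ω => f ω * u ω) = (An n).indicator q := by
      funext ω
      by_cases hω : ω ∈ An n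
      · have hpos := hApos n ω hω
        have hane : a ω ≠ 0 := hpos.ne'
        simp only [hu_def, hq_def, Set.indicator_of_mem hω]
        field_simp
      · simp only [hu_def, Set.indicator_of_notMem hω]
        ring
    have hle0 := hB u hu2 hsu
    rw [hau2, hfu] at hle0
    have hle : I n ≤ C * Real.sqrt (I n) := by
      exact (le_abs_self (I n)).trans hle0
    set s := Real.sqrt (I n) with hs_def
    have hssq : s ^ 2 = I n := Real.sq_sqrt (hInn n)
    have hsnn : 0 ≤ s := Real.sqrt_nonneg _
    rcases hsnn.eq_or_lt with h0 | h0
    · nlinarith [sq_nonneg C]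
    · have hsC : s ≤ C := by
        have : s * s ≤ C * s := by rw [← sq, hssq]; exact hle
        exact le_of_mul_le_mul_right this h0
      calc I n = s ^ 2 := hssq.symm
        _ ≤ C ^ 2 := by gcongr
  have hbddG : ∀ C : ℝ, 0 ≤ C → Bdd C → Gval ≤ ENNReal.ofReal (C ^ 2) := by
    intro C hC0 hC
    rw [hkey (hvanB C hC)]
    exact iSup_le fun n => ENNReal.ofReal_le_ofReal (hIle C hC0 hC n)
  -- finiteness implies vanishing on {a = 0}
  have hvanF : Gval ≠ ⊤ → ∀ᵐ ω ∂μ, a ω = 0 → f ω = 0 := by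
    intro hfin
    have hmeas2 : Measurable (fun ω => ENNReal.ofReal (f ω ^ 2) / ENNReal.ofReal (a ω)) :=
      (ENNReal.measurable_ofReal.comp (hfmeas.pow_const 2)).div
        (ENNReal.measurable_ofReal.comp hameas)
    have hlt := ae_lt_top hmeas2 (part1 ▸ hfin)
    filter_upwards [hlt] with ω hω h0
    by_contra hne
    have hfpos2 : 0 < f ω ^ 2 := by positivity
    rw [h0] at hω
    simp only [ENNReal.ofReal_zero] at hω
    rw [ENNReal.div_zero (by simpa [ENNReal.ofReal_eq_zero, not_le] using hne)] at hω
    exact (lt_irrefl _ hω)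
  -- Cauchy-Schwarz: finiteness gives the bound with the optimal constant
  have hCS : Gval ≠ ⊤ → Bdd (Real.sqrt Gval.toReal) := by
    intro hfin
    have hvan := hvanF hfin
    set g0 : Ω → ℝ := fun ω => if a ω = 0 then 0 else f ω / Real.sqrt (a ω) with hg0_def
    have hg0meas : Measurable g0 := by
      refine Measurable.ite (hameas (measurableSet_singleton 0)) measurable_const ?_
      exact hfmeas.div (hameas.sqrt)
    have hg0nn : ∀ ω, 0 ≤ g0 ω := by
      intro ω
      rw [hg0_def]
      by_cases h : a ω = 0
      · simp [h]
      · simp only [h, if_false]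
        exact div_nonneg (hfpos ω) (Real.sqrt_nonneg _)
    have hg0sq : ∀ᵐ ω ∂μ, ENNReal.ofReal (g0 ω ^ 2)
        = ENNReal.ofReal (f ω ^ 2) / ENNReal.ofReal (a ω) := by
      filter_upwards [hvan] with ω hω
      by_cases h : a ω = 0
      · simp [hg0_def, h, hω h]
      · have hpos := (ha ω).lt_of_ne (Ne.symm h)
        rw [hg0_def]
        simp only [h, if_false]
        rw [div_pow, Real.sq_sqrt (ha ω), ENNReal.ofReal_div_of_pos hpos]
    have hlg : ∫⁻ ω, ENNReal.ofReal (g0 ω ^ 2) ∂μ = Gval := by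
      rw [lintegral_congr_ae hg0sq, ← part1]
    have hg0int : Integrable (fun ω => g0 ω ^ 2) μ := by
      refine ⟨(hg0meas.pow_const 2).aestronglyMeasurable, ?_⟩
      rw [HasFiniteIntegral]
      have : ∀ ω, ‖g0 ω ^ 2‖ₑ = ENNReal.ofReal (g0 ω ^ 2) := fun ω =>
        Real.enorm_eq_ofReal (sq_nonneg _)
      simp_rw [this, hlg]
      exact hfin.lt_top
    have hg0mem : MemLp g0 2 μ :=
      (memLp_two_iff_integrable_sq hg0meas.aestronglyMeasurable).2 hg0int
    have hg0val : ∫ ω, g0 ω ^ 2 ∂μ = Gval.toReal := by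
      rw [integral_eq_lintegral_of_nonneg_ae
        (Filter.Eventually.of_forall fun ω => sq_nonneg _)
        (hg0meas.pow_const 2).aestronglyMeasurable, hlg]
    rw [hBdd]
    intro u hu2 hsu
    set h : Ω → ℝ := fun ω => Real.sqrt (a ω) * u ω with hh_def
    have heq : (fun ω => f ω * u ω) =ᵐ[μ] fun ω => g0 ω * h ω := by
      filter_upwards [hvan] with ω hω
      by_cases hc : a ω = 0
      · simp [hg0_def, hc, hω hc]
      · have hpos := (ha ω).lt_of_ne (Ne.symm hc)
        have hsq : Real.sqrt (a ω) ≠ 0 := by positivity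
        rw [hg0_def, hh_def]
        simp only [hc, if_false]
        field_simp
    have hconj : Real.HolderConjugate 2 2 := Real.holderConjugate_iff.mpr ⟨one_lt_two, by norm_num⟩
    have h2 : (ENNReal.ofReal (2:ℝ)) = 2 := by norm_num
    have hgabs : MemLp |g0| (ENNReal.ofReal (2:ℝ)) μ := by rw [h2]; exact hg0mem.abs
    have hhabs : MemLp |h| (ENNReal.ofReal (2:ℝ)) μ := by rw [h2]; exact hsu.abs
    have hHolder := integral_mul_le_Lp_mul_Lq_of_nonneg hconj
      (Filter.Eventually.of_forall fun ω => abs_nonneg (g0 ω))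
      (Filter.Eventually.of_forall fun ω => abs_nonneg (h ω)) hgabs hhabs
    have habs2 : ∀ x : ℝ, |x| ^ (2:ℝ) = x ^ 2 := by
      intro x
      rw [show (2:ℝ) = ((2:ℕ):ℝ) by norm_num, Real.rpow_natCast, sq_abs]
    simp_rw [habs2] at hHolder
    have hgoal1 : |∫ ω, f ω * u ω ∂μ| ≤ ∫ ω, |g0 ω| * |h ω| ∂μ := by
      rw [integral_congr_ae heq]
      simpa [Real.norm_eq_abs, abs_mul] using
        norm_integral_le_integral_norm (μ := μ) (fun ω => g0 ω * h ω)
    have hh2 : (fun ω => h ω ^ 2) = fun ω => a ω * u ω ^ 2 := by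
      funext ω
      rw [hh_def]
      simp only
      rw [mul_pow, Real.sq_sqrt (ha ω)]
    rw [hh2, hg0val] at hHolder
    calc |∫ ω, f ω * u ω ∂μ| ≤ ∫ ω, |g0 ω| * |h ω| ∂μ := hgoal1
      _ ≤ Gval.toReal ^ (1/2:ℝ) * (∫ ω, a ω * u ω ^ 2 ∂μ) ^ (1/2:ℝ) := hHolder
      _ = Real.sqrt Gval.toReal * Real.sqrt (∫ ω, a ω * u ω ^ 2 ∂μ) := by
        rw [Real.sqrt_eq_rpow, Real.sqrt_eq_rpow]
  -- assemble
  refine ⟨part1, ⟨fun hfin => ⟨Real.sqrt Gval.toReal, Real.sqrt_nonneg _, hCS hfin⟩, ?_⟩, ?_⟩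
  · rintro ⟨C, hC0, hC⟩
    exact ne_top_of_le_ne_top ENNReal.ofReal_ne_top (hbddG C hC0 hC)
  · intro hfin
    refine ⟨⟨Real.sqrt_nonneg _, hCS hfin⟩, ?_⟩
    rintro C ⟨hC0, hC⟩
    have hle : Gval.toReal ≤ C ^ 2 := by
      refine ENNReal.toReal_le_of_le_ofReal (by positivity) (hbddG C hC0 hC)
    calc Real.sqrt Gval.toReal ≤ Real.sqrt (C ^ 2) := Real.sqrt_le_sqrt hle
      _ = C := Real.sqrt_sq hC0
end
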